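/- Let 𝒜 be a finite set with |𝒜| = K, let 𝒜₀ ⊆ 𝒜 with |𝒜₀| = K₀ where 0 < K₀ < K, let c > 0 and T > 0 be real numbers, and define T_S(a) = c for a ∈ 𝒜₀ and T_S(a) = 0 for a ∈ 𝒜 \ 𝒜₀. Then the greatest element of the set {τ ∈ ℝ : there exists n : 𝒜 → ℝ such that (τ, n) is feasible for the LP} equals T/(K − K₀) if c·(K − K₀) > T, and equals (T + c·K₀)/K otherwise. -/

import Mathlib

/-- `(τ, n)` is a feasible pair for the LP with offline sample sizes `TS` and budget `T`. -/
def LPfeasible {α : Type*} [Fintype α] (TS : α → ℝ) (T : ℝ) (τ : ℝ) (n : α → ℝ) : Prop :=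
  0 ≤ τ ∧ (∀ a, 0 ≤ n a) ∧ (∑ a, n a) = T ∧ ∀ a, τ ≤ TS a + n a

/-- Closed form of the LP optimum in the two-group case: `K₀` arms have offline sample size
`c > 0` and the remaining `K - K₀` arms have none. -/
theorem lp_optimum_two_group_case
    {α : Type*} [Fintype α] [DecidableEq α]
    (K K₀ : ℕ) (hK : Fintype.card α = K)
    (A₀ : Finset α) (hA₀ : A₀.card = K₀) (hK₀pos : 0 < K₀) (hK₀K : K₀ < K)
    (c T : ℝ) (hc : 0 < c) (hT : 0 < T) :
    IsGreatest
      {τ : ℝ | ∃ n : α → ℝ, LPfeasible (fun a => if a ∈ A₀ then c else 0) T τ n}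
      (if c * ((K : ℝ) - (K₀ : ℝ)) > T then T / ((K : ℝ) - (K₀ : ℝ))
        else (T + c * (K₀ : ℝ)) / (K : ℝ)) := by
  have hm : (0:ℝ) < (K:ℝ) - (K₀:ℝ) := by
    have : (K₀:ℝ) < K := by exact_mod_cast hK₀K
    linarith
  have hKpos : (0:ℝ) < (K:ℝ) := by
    have : (0:ℕ) < K := lt_trans hK₀pos hK₀K
    exact_mod_cast this
  have hcard : (A₀ᶜ).card = K - K₀ := by
    rw [Finset.card_compl, hA₀, hK]
  have hcastm : ((A₀ᶜ).card : ℝ) = (K:ℝ) - (K₀:ℝ) := by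
    rw [hcard, Nat.cast_sub hK₀K.le]
  have hsum : ∀ x y : ℝ, (∑ a : α, (if a ∈ A₀ then x else y))
      = (K₀:ℝ) * x + ((K:ℝ) - (K₀:ℝ)) * y := by
    intro x y
    rw [← Finset.sum_add_sum_compl A₀]
    have h1 : (∑ a ∈ A₀, (if a ∈ A₀ then x else y)) = (K₀:ℝ) * x := by
      rw [Finset.sum_congr rfl (fun a ha => if_pos ha), Finset.sum_const, hA₀,
        nsmul_eq_mul]
    have h2 : (∑ a ∈ A₀ᶜ, (if a ∈ A₀ then x else y)) = ((K:ℝ) - (K₀:ℝ)) * y := by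
      rw [Finset.sum_congr rfl (fun a ha => if_neg (Finset.mem_compl.mp ha)),
        Finset.sum_const, nsmul_eq_mul, hcastm]
    rw [h1, h2]
  split_ifs with h
  · constructor
    · refine ⟨fun a => if a ∈ A₀ then 0 else T / ((K:ℝ) - (K₀:ℝ)), ?_, ?_, ?_, ?_⟩
      · positivity
      · intro a; dsimp only; split_ifs
        · exact le_refl 0
        · positivity
      · rw [hsum]; field_simp; simp
      · intro a; dsimp only; split_ifs with ha
        · rw [add_zero]
          rw [div_le_iff₀ hm]
          linarith
        · rw [zero_add]
    · rintro τ ⟨n, hτ0, hn0, hnsum, hfeas⟩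
      have h1 : ∑ _a ∈ A₀ᶜ, τ ≤ ∑ a ∈ A₀ᶜ, n a := by
        refine Finset.sum_le_sum fun a ha => ?_
        have := hfeas a
        simpa [Finset.mem_compl.mp ha] using this
      have h2 : ∑ a ∈ A₀ᶜ, n a ≤ T := by
        have h3 : 0 ≤ ∑ a ∈ A₀, n a := Finset.sum_nonneg fun a _ => hn0 a
        have h4 := Finset.sum_add_sum_compl A₀ n
        rw [hnsum] at h4
        linarith
      rw [Finset.sum_const, nsmul_eq_mul, hcastm] at h1
      rw [le_div_iff₀ hm]
      calc τ * ((K:ℝ) - K₀) = ((K:ℝ) - K₀) * τ := mul_comm _ _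
        _ ≤ T := h1.trans h2
  · push_neg at h
    set τ' : ℝ := (T + c * (K₀:ℝ)) / (K:ℝ) with hτ'
    have hcτ : c ≤ τ' := by
      rw [hτ', le_div_iff₀ hKpos]
      nlinarith
    constructor
    · refine ⟨fun a => if a ∈ A₀ then τ' - c else τ', ?_, ?_, ?_, ?_⟩
      · positivity
      · intro a; dsimp only; split_ifs
        · linarith
        · linarith [hc.le.trans hcτ]
      · rw [hsum]
        have : (K:ℝ) * τ' = T + c * K₀ := by
          rw [hτ', mul_div_cancel₀ _ hKpos.ne']
        nlinarith
      · intro a; dsimp only; split_ifs <;> simp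
    · rintro τ ⟨n, hτ0, hn0, hnsum, hfeas⟩
      have h1 : ∑ _a : α, τ ≤ ∑ a : α, ((if a ∈ A₀ then c else 0) + n a) :=
        Finset.sum_le_sum fun a _ => hfeas a
      rw [Finset.sum_const, Finset.card_univ, hK, nsmul_eq_mul, Finset.sum_add_distrib,
        hsum, hnsum] at h1
      rw [hτ', le_div_iff₀ hKpos]
      nlinarith
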